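/- For all positive integers n and k with k ≥ 2, there exist a positive integer m and a matrix A with entries in {0,1}, having n rows and m columns, such that for every coloring χ: [m] → [k] there exists a color s ∈ [k] with ‖A((1/k)·𝟏 − 𝟏(χ⁻¹(s)))‖_∞ ≥ √(n−1)/16. Equivalently, the maximum k-color discrepancy satisfies exdisc(n, k) ≥ √(n−1)/16. -/

import Mathlib

open Finset

namespace ExdiscLB

abbrev V (t : ℕ) := Fin t → ZMod 2

noncomputable def chi (x : ZMod 2) : ℝ := if x = 0 then 1 else -1

lemma chi_zero : chi 0 = 1 := by simp [chi]

lemma chi_one : chi 1 = -1 := by simp [chi]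

lemma chi_add (x y : ZMod 2) : chi (x + y) = chi x * chi y := by
  have h : ∀ z : ZMod 2, z = 0 ∨ z = 1 := by decide
  rcases h x with hx | hx <;> rcases h y with hy | hy <;>
    simp [hx, hy, chi, show (1 + 1 : ZMod 2) = 0 by decide]

def ip {t : ℕ} (a b : V t) : ZMod 2 := ∑ i, a i * b i

lemma ip_comm {t : ℕ} (a b : V t) : ip a b = ip b a := by
  simp [ip, mul_comm]

lemma ip_add_right {t : ℕ} (a b c : V t) : ip a (b + c) = ip a b + ip a c := by
  simp [ip, mul_add, Finset.sum_add_distrib]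

lemma ip_add_left {t : ℕ} (a b c : V t) : ip (a + b) c = ip a c + ip b c := by
  simp [ip, add_mul, Finset.sum_add_distrib]

lemma ip_single {t : ℕ} (a : V t) (i : Fin t) :
    ip a (Pi.single i 1) = a i := by
  simp [ip, Pi.single_apply, mul_ite]

lemma card_V (t : ℕ) : Fintype.card (V t) = 2 ^ t := by
  simp [Fintype.card_fun, ZMod.card]

lemma sum_chi {t : ℕ} (a : V t) :
    ∑ b : V t, chi (ip a b) = if a = 0 then (2 ^ t : ℝ) else 0 := by
  by_cases h : a = 0
  · subst h
    have h0 : ∀ b : V t, ip (0 : V t) b = 0 := by intro b; simp [ip]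
    simp [h0, chi_zero, card_V]
  · rw [if_neg h]
    obtain ⟨i, hi⟩ : ∃ i, a i ≠ 0 := by
      by_contra hc; push_neg at hc; exact h (funext fun i => hc i)
    have hai : a i = 1 := (show ∀ x : ZMod 2, x ≠ 0 → x = 1 by decide) _ hi
    have hinv : ∑ b : V t, chi (ip a (b + Pi.single i 1)) = ∑ b : V t, chi (ip a b) := by
      apply Fintype.sum_bijective (fun b : V t => b + Pi.single i 1)
        (AddGroup.addRight_bijective _) <;> intro b <;> rfl
    have hneg : ∀ b : V t, chi (ip a (b + Pi.single i 1)) = - chi (ip a b) := by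
      intro b
      rw [ip_add_right, chi_add, ip_single, hai, chi_one]; ring
    have : ∑ b : V t, chi (ip a b) = -∑ b : V t, chi (ip a b) := by
      conv_lhs => rw [← hinv]
      rw [Finset.sum_congr rfl (fun b _ => hneg b)]
      simp
    linarith

lemma sum_chi_mul {t : ℕ} (p q : V t) :
    ∑ a : V t, chi (ip a p) * chi (ip a q) = if p = q then (2 ^ t : ℝ) else 0 := by
  have h1 : ∀ a : V t, chi (ip a p) * chi (ip a q) = chi (ip (p + q) a) := by
    intro a
    rw [ip_add_left, chi_add, ip_comm p a, ip_comm q a]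
  have h2 : p + q = 0 ↔ p = q := by
    constructor
    · intro h; funext i
      have := congrFun h i
      exact (show ∀ x y : ZMod 2, x + y = 0 → x = y by decide) _ _ this
    · intro h; subst h; funext i
      exact (show ∀ x : ZMod 2, x + x = 0 by decide) _
  by_cases h : p = q
  · simp only [h1, sum_chi, if_pos (h2.mpr h), if_pos h]
  · simp only [h1, sum_chi, if_neg (fun c => h (h2.mp c)), if_neg h]

lemma exists_row {t : ℕ} (x : V t → ℝ) :
    ∃ a : V t, (∑ p ∈ Finset.univ.erase (0 : V t), x p ^ 2) / 4
      ≤ (∑ p : V t, (1 + chi (ip a p)) / 2 * x p) ^ 2 := by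
  set N : ℝ := (2 : ℝ) ^ t with hN
  have hNpos : 0 < N := by positivity
  set σ : ℝ := ∑ p : V t, x p with hσ
  set H : V t → ℝ := fun a => ∑ p : V t, chi (ip a p) * x p with hH
  set S : ℝ := ∑ p ∈ Finset.univ.erase (0 : V t), x p ^ 2 with hS
  have hcard : ((Fintype.card (V t)) : ℝ) = N := by rw [card_V]; push_cast; rfl
  have hA : ∀ a : V t, ∑ p : V t, (1 + chi (ip a p)) / 2 * x p = (σ + H a) / 2 := by
    intro a
    have h1 : ∀ p : V t, (1 + chi (ip a p)) / 2 * x p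
        = x p / 2 + chi (ip a p) * x p / 2 := fun p => by ring
    rw [Finset.sum_congr rfl (fun p _ => h1 p), Finset.sum_add_distrib,
      ← Finset.sum_div, ← Finset.sum_div, hσ, hH]
    ring
  have hB : ∑ a : V t, H a = N * x 0 := by
    simp only [hH]
    rw [Finset.sum_comm]
    have h1 : ∀ p : V t, ∑ a : V t, chi (ip a p) * x p
        = (if p = 0 then N else 0) * x p := by
      intro p
      rw [← Finset.sum_mul]
      congr 1
      rw [Finset.sum_congr rfl (fun a _ => by rw [ip_comm])]
      exact sum_chi p
    rw [Finset.sum_congr rfl (fun p _ => h1 p)]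
    simp [ite_mul, Finset.sum_ite_eq]
  have hC : ∑ a : V t, H a ^ 2 = N * ∑ p : V t, x p ^ 2 := by
    have expand : ∀ a : V t, H a ^ 2
        = ∑ p : V t, ∑ q : V t, chi (ip a p) * chi (ip a q) * (x p * x q) := by
      intro a
      rw [hH, sq, Finset.sum_mul_sum]
      exact Finset.sum_congr rfl fun p _ => Finset.sum_congr rfl fun q _ => by ring
    rw [Finset.sum_congr rfl (fun a _ => expand a), Finset.sum_comm]
    have swap2 : ∀ p : V t, ∑ a : V t, ∑ q : V t, chi (ip a p) * chi (ip a q) * (x p * x q)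
        = ∑ q : V t, (if p = q then N else 0) * (x p * x q) := by
      intro p
      rw [Finset.sum_comm]
      refine Finset.sum_congr rfl fun q _ => ?_
      rw [← Finset.sum_mul, sum_chi_mul]
    rw [Finset.sum_congr rfl (fun p _ => swap2 p)]
    have h2 : ∀ p : V t, ∑ q : V t, (if p = q then N else 0) * (x p * x q)
        = N * x p ^ 2 := by
      intro p
      rw [Finset.sum_eq_single p (fun q _ hq => by rw [if_neg (Ne.symm hq), zero_mul])
        (fun h => absurd (Finset.mem_univ p) h), if_pos rfl]
      ring
    rw [Finset.sum_congr rfl (fun p _ => h2 p), ← Finset.mul_sum]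
  have hsplit : x 0 ^ 2 + S = ∑ p : V t, x p ^ 2 :=
    Finset.add_sum_erase Finset.univ (fun p => x p ^ 2) (Finset.mem_univ 0)
  have hsum : ∑ a : V t, ((σ + H a) / 2) ^ 2
      = (N * σ ^ 2 + 2 * σ * (N * x 0) + N * ∑ p : V t, x p ^ 2) / 4 := by
    have h1 : ∀ a : V t, ((σ + H a) / 2) ^ 2
        = σ ^ 2 / 4 + (2 * σ / 4) * H a + (1/4) * H a ^ 2 := fun a => by ring
    rw [Finset.sum_congr rfl (fun a _ => h1 a), Finset.sum_add_distrib,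
      Finset.sum_add_distrib, ← Finset.mul_sum, ← Finset.mul_sum, hB, hC,
      Finset.sum_const, nsmul_eq_mul, Finset.card_univ, hcard]
    ring
  have hlow : (Fintype.card (V t)) • (S / 4) ≤ ∑ a : V t, ((σ + H a) / 2) ^ 2 := by
    rw [hsum, nsmul_eq_mul, hcard]
    have h3 : N * σ ^ 2 + 2 * σ * (N * x 0) + N * ∑ p : V t, x p ^ 2
        = N * ((σ + x 0) ^ 2 + S) := by
      rw [← hsplit]; ring
    rw [h3]
    nlinarith [mul_nonneg hNpos.le (sq_nonneg (σ + x 0))]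
  obtain ⟨a, -, ha⟩ := Finset.exists_le_of_sum_le (Finset.univ_nonempty (α := V t))
    (by simpa [Finset.sum_const] using hlow :
      ∑ _a : V t, S / 4 ≤ ∑ a : V t, ((σ + H a) / 2) ^ 2)
  exact ⟨a, by rw [hA a]; exact ha⟩

lemma nat_le_sq (m : ℕ) : (m : ℝ) ≤ (m : ℝ) ^ 2 := by
  have : m ≤ m ^ 2 := Nat.le_self_pow two_ne_zero m
  exact_mod_cast this

lemma numeric {k : ℕ} (hk : 2 ≤ k) (c : Fin k → ℕ) (hc : ∑ s, c s = k / 2) :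
    ((k : ℝ) - 1) / 4 ≤ ∑ s : Fin k, (((k / 2 : ℕ) : ℝ) / (k : ℝ) - (c s : ℝ)) ^ 2 := by
  set r : ℕ := k / 2 with hrdef
  have hkpos : 0 < k := by omega
  have hk0 : (0 : ℝ) < k := by exact_mod_cast hkpos
  have h2r : 2 * r ≤ k := by omega
  have h2r1 : k ≤ 2 * r + 1 := by omega
  have hr1 : 1 ≤ r := by omega
  have h2rR : 2 * (r : ℝ) ≤ k := by exact_mod_cast h2r
  have h2r1R : (k : ℝ) ≤ 2 * r + 1 := by exact_mod_cast h2r1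
  have hr1R : (1 : ℝ) ≤ r := by exact_mod_cast hr1
  have hsum : ∑ s : Fin k, (c s : ℝ) = (r : ℝ) := by
    rw [← Nat.cast_sum, hc]
  have hid : ∑ s : Fin k, ((r : ℝ) / (k : ℝ) - (c s : ℝ)) ^ 2
      = (∑ s : Fin k, ((c s : ℝ) ^ 2 - (c s : ℝ))) + ((r : ℝ) - (r : ℝ) ^ 2 / k) := by
    have h1 : ∀ s : Fin k, ((r : ℝ) / k - c s) ^ 2
        = ((c s : ℝ) ^ 2 - c s) + (((r : ℝ) / k) ^ 2 - (2 * (r : ℝ) / k - 1) * c s) :=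
      fun s => by ring
    rw [Finset.sum_congr rfl fun s _ => h1 s, Finset.sum_add_distrib]
    congr 1
    rw [Finset.sum_sub_distrib, Finset.sum_const, ← Finset.mul_sum, hsum,
      Finset.card_univ, Fintype.card_fin, nsmul_eq_mul]
    field_simp
    ring
  rw [hid]
  have hpos : 0 ≤ ∑ s : Fin k, ((c s : ℝ) ^ 2 - (c s : ℝ)) :=
    Finset.sum_nonneg fun s _ => by linarith [nat_le_sq (c s)]
  have hfrac : ((k : ℝ) - 1) / 4 ≤ (r : ℝ) - (r : ℝ) ^ 2 / k := by
    rw [div_le_iff₀ (by norm_num : (0:ℝ) < 4), ← sub_nonneg]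
    have expand : ((r:ℝ) - (r:ℝ)^2/k) * 4 - ((k:ℝ) - 1)
        = (((k:ℝ) - 2*r) * (2*(r:ℝ) + 1 - k) + 2*r) / k := by
      field_simp
      ring
    rw [expand]
    apply div_nonneg _ hk0.le
    have := mul_nonneg (by linarith : (0:ℝ) ≤ (k:ℝ) - 2*r) (by linarith : (0:ℝ) ≤ 2*(r:ℝ) + 1 - k)
    linarith
  linarith

end ExdiscLB

set_option maxHeartbeats 1000000 in
open ExdiscLB Finset in
/-- For all positive integers `n` and `k ≥ 2`, there exist a positive
integer `m` and a matrix `A ∈ {0,1}^{n×m}` such that for every coloring `χ : [m] → [k]`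
there exists a color `s` with `‖A((1/k)·𝟏 − 𝟏(χ⁻¹(s)))‖_∞ ≥ √(n−1)/16`.  (Since `n > 0`,
the `∞`-norm bound is expressed as the existence of a coordinate of absolute value at
least `√(n−1)/16`.)  Equivalently, `exdisc(n, k) ≥ √(n−1)/16`. -/
theorem exdisc_lower_bound (n k : ℕ) (hn : 0 < n) (hk : 2 ≤ k) :
    ∃ (m : ℕ), 0 < m ∧ ∃ A : Matrix (Fin n) (Fin m) ℝ,
      (∀ i j, A i j = 0 ∨ A i j = 1) ∧
      ∀ χ : Fin m → Fin k, ∃ s : Fin k, ∃ i : Fin n,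
        Real.sqrt ((n : ℝ) - 1) / 16 ≤
          |A.mulVec (fun j => 1 / (k : ℝ) - if χ j = s then 1 else 0) i| := by
  classical
  set t := Nat.log 2 n with ht
  set N := 2 ^ t with hNdef
  have hNn : N ≤ n := Nat.pow_log_le_self 2 hn.ne'
  have hnN : n < 2 * N := by
    have h := Nat.lt_pow_succ_log_self (by norm_num : 1 < 2) n
    rw [Nat.pow_succ, ← ht] at h
    omega
  have hNpos : 0 < N := Nat.pow_pos (by norm_num)
  set r := k / 2 with hrdef
  have hr1 : 1 ≤ r := by omega
  have hkpos : 0 < k := by omega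
  haveI : Nonempty (Fin k) := ⟨⟨0, hkpos⟩⟩
  haveI : Nonempty (Fin r) := ⟨⟨0, by omega⟩⟩
  have hcardC : Fintype.card (V t × Fin r) = N * r := by
    simp [card_V, hNdef]
  have hcardN : Fintype.card (V t) = N := card_V t
  set eC : V t × Fin r ≃ Fin (N * r) := Fintype.equivFinOfCardEq hcardC with heC
  set eN : V t ≃ Fin N := Fintype.equivFinOfCardEq hcardN with heN
  refine ⟨N * r, Nat.mul_pos hNpos (by omega), ?_⟩
  set A : Matrix (Fin n) (Fin (N * r)) ℝ := fun i j =>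
    if h : (i : ℕ) < N then (1 + chi (ip (eN.symm ⟨(i : ℕ), h⟩) ((eC.symm j).1))) / 2 else 0
    with hA
  refine ⟨A, ?_, ?_⟩
  · intro i j
    rw [hA]
    dsimp only
    split
    · rcases (show ∀ z : ZMod 2, z = 0 ∨ z = 1 by decide)
        (ip (eN.symm ⟨(i : ℕ), by assumption⟩) ((eC.symm j).1)) with h | h
      · right; rw [h, chi_zero]; norm_num
      · left; rw [h, chi_one]; norm_num
    · left; rfl
  · intro χ
    set w : Fin k → Fin (N * r) → ℝ :=
      fun s j => 1 / (k : ℝ) - if χ j = s then 1 else 0 with hw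
    set cnt : Fin k → V t → ℕ :=
      fun s p => (Finset.univ.filter (fun u : Fin r => χ (eC (p, u)) = s)).card with hcnt
    have hcnt_sum : ∀ p : V t, ∑ s : Fin k, cnt s p = r := by
      intro p
      rw [hcnt]
      have h1 : ∀ s : Fin k, (Finset.univ.filter (fun u : Fin r => χ (eC (p, u)) = s)).card
          = ∑ u : Fin r, if χ (eC (p, u)) = s then 1 else 0 := by
        intro s
        rw [Finset.sum_boole]
        norm_num
      rw [Finset.sum_congr rfl fun s _ => h1 s, Finset.sum_comm]
      have h2 : ∀ u : Fin r, ∑ s : Fin k, (if χ (eC (p, u)) = s then 1 else 0) = 1 := by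
        intro u
        rw [Finset.sum_ite_eq Finset.univ (χ (eC (p, u))) (fun _ => 1)]
        simp
      rw [Finset.sum_congr rfl fun u _ => h2 u]
      simp
    set x : Fin k → V t → ℝ := fun s p => (r : ℝ) / (k : ℝ) - (cnt s p : ℝ) with hx
    -- lower bound on total sum of squares over p ≠ 0
    have hcard_erase : ((Finset.univ.erase (0 : V t)).card : ℝ) = (N : ℝ) - 1 := by
      rw [Finset.card_erase_of_mem (Finset.mem_univ 0), Finset.card_univ, hcardN]
      have : 1 ≤ N := hNpos
      push_cast [Nat.cast_sub this]
      ring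
    have htot : ((N : ℝ) - 1) * (((k : ℝ) - 1) / 4)
        ≤ ∑ s : Fin k, ∑ p ∈ Finset.univ.erase (0 : V t), x s p ^ 2 := by
      rw [Finset.sum_comm]
      calc ((N : ℝ) - 1) * (((k : ℝ) - 1) / 4)
          = ∑ _p ∈ Finset.univ.erase (0 : V t), ((k : ℝ) - 1) / 4 := by
            rw [Finset.sum_const, nsmul_eq_mul, hcard_erase]
        _ ≤ ∑ p ∈ Finset.univ.erase (0 : V t), ∑ s : Fin k, x s p ^ 2 := by
            apply Finset.sum_le_sum
            intro p _
            have := numeric hk (fun s => cnt s p) (hcnt_sum p)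
            simpa [hx, hrdef] using this
    -- choose a good colour s
    have havg : ∃ s : Fin k, ((N : ℝ) - 1) * (((k : ℝ) - 1) / 4) / (k : ℝ)
        ≤ ∑ p ∈ Finset.univ.erase (0 : V t), x s p ^ 2 := by
      have hsum_const : ∑ _s : Fin k, ((N : ℝ) - 1) * (((k : ℝ) - 1) / 4) / (k : ℝ)
          = ((N : ℝ) - 1) * (((k : ℝ) - 1) / 4) := by
        rw [Finset.sum_const, nsmul_eq_mul, Finset.card_univ, Fintype.card_fin]
        field_simp
      obtain ⟨s, -, hs⟩ := Finset.exists_le_of_sum_le Finset.univ_nonempty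
        (show ∑ _s : Fin k, ((N : ℝ) - 1) * (((k : ℝ) - 1) / 4) / (k : ℝ)
            ≤ ∑ s : Fin k, ∑ p ∈ Finset.univ.erase (0 : V t), x s p ^ 2 by
          rw [hsum_const]; exact htot)
      exact ⟨s, hs⟩
    obtain ⟨s, hs⟩ := havg
    obtain ⟨a, ha⟩ := exists_row (x s)
    refine ⟨s, ⟨((eN a : Fin N) : ℕ), lt_of_lt_of_le (eN a).isLt hNn⟩, ?_⟩
    -- compute the matrix-vector product
    have hval : A.mulVec (w s) ⟨((eN a : Fin N) : ℕ), lt_of_lt_of_le (eN a).isLt hNn⟩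
        = ∑ p : V t, (1 + chi (ip a p)) / 2 * x s p := by
      have hAentry : ∀ j : Fin (N * r),
          A (⟨((eN a : Fin N) : ℕ), lt_of_lt_of_le (eN a).isLt hNn⟩ : Fin n) j
          = (1 + chi (ip a ((eC.symm j).1))) / 2 := by
        intro j
        rw [hA]
        dsimp only
        rw [dif_pos (eN a).isLt]
        congr 2
        rw [show (⟨((eN a : Fin N) : ℕ), (eN a).isLt⟩ : Fin N) = eN a from Fin.eta _ _,
          Equiv.symm_apply_apply]
      calc A.mulVec (w s) ⟨((eN a : Fin N) : ℕ), lt_of_lt_of_le (eN a).isLt hNn⟩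
          = ∑ j : Fin (N * r),
              A (⟨((eN a : Fin N) : ℕ), lt_of_lt_of_le (eN a).isLt hNn⟩ : Fin n) j * w s j := rfl
        _ = ∑ j : Fin (N * r), (1 + chi (ip a ((eC.symm j).1))) / 2 * w s j :=
            Finset.sum_congr rfl fun j _ => by rw [hAentry j]
        _ = ∑ q : V t × Fin r, (1 + chi (ip a q.1)) / 2 * w s (eC q) := by
            rw [← Equiv.sum_comp eC (fun j => (1 + chi (ip a ((eC.symm j).1))) / 2 * w s j)]
            exact Finset.sum_congr rfl fun q _ => by rw [Equiv.symm_apply_apply]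
        _ = ∑ p : V t, ∑ u : Fin r, (1 + chi (ip a p)) / 2 * w s (eC (p, u)) := by
            rw [Fintype.sum_prod_type]
        _ = ∑ p : V t, (1 + chi (ip a p)) / 2 * x s p := by
            refine Finset.sum_congr rfl fun p _ => ?_
            rw [← Finset.mul_sum]
            congr 1
            rw [hw, hx, hcnt]
            dsimp only
            rw [Finset.sum_sub_distrib, Finset.sum_const, nsmul_eq_mul,
              Finset.card_univ, Fintype.card_fin, Finset.sum_boole]
            norm_num
            try ring
    rw [hval]
    -- numeric chain
    set val : ℝ := ∑ p : V t, (1 + chi (ip a p)) / 2 * x s p with hvaldef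
    have hNR : ((N : ℕ) : ℝ) = (2 : ℝ) ^ t := by push_cast [hNdef]; ring
    have hn1 : (0 : ℝ) ≤ (n : ℝ) - 1 := by
      have : (1 : ℝ) ≤ n := by exact_mod_cast hn
      linarith
    have hkR : (2 : ℝ) ≤ (k : ℝ) := by exact_mod_cast hk
    have hN1 : ((n : ℝ) - 1) / 2 ≤ (N : ℝ) - 1 := by
      have : (n : ℝ) ≤ 2 * (N : ℝ) - 1 := by
        have h1 : n ≤ 2 * N - 1 := by omega
        have h2 : ((2 * N - 1 : ℕ) : ℝ) = 2 * (N : ℝ) - 1 := by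
          push_cast [Nat.cast_sub (by omega : 1 ≤ 2 * N)]
          ring
        calc (n : ℝ) ≤ ((2 * N - 1 : ℕ) : ℝ) := by exact_mod_cast h1
          _ = 2 * (N : ℝ) - 1 := h2
      linarith
    have hval2 : ((n : ℝ) - 1) / 64 ≤ val ^ 2 := by
      have h1 : ((N : ℝ) - 1) * (((k : ℝ) - 1) / 4) / (k : ℝ) / 4 ≤ val ^ 2 := by
        calc ((N : ℝ) - 1) * (((k : ℝ) - 1) / 4) / (k : ℝ) / 4
            ≤ (∑ p ∈ Finset.univ.erase (0 : V t), x s p ^ 2) / 4 := by linarith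
          _ ≤ val ^ 2 := ha
      have hk2 : ((k : ℝ) - 1) / (k : ℝ) ≥ 1 / 2 := by
        rw [ge_iff_le, div_le_div_iff₀ (by norm_num) (by linarith)]
        linarith
      have hN1' : (0 : ℝ) ≤ (N : ℝ) - 1 := by
        have : (1 : ℝ) ≤ (N : ℝ) := by exact_mod_cast hNpos
        linarith
      have h2 : ((N : ℝ) - 1) / 32 ≤ ((N : ℝ) - 1) * (((k : ℝ) - 1) / 4) / (k : ℝ) / 4 := by
        have : ((N : ℝ) - 1) * (((k : ℝ) - 1) / 4) / (k : ℝ) / 4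
            = ((N : ℝ) - 1) * (((k : ℝ) - 1) / (k : ℝ)) / 16 := by
          ring
        rw [this]
        have := mul_le_mul_of_nonneg_left hk2 hN1'
        linarith
      linarith
    -- final square root manipulation
    have habs : Real.sqrt ((n : ℝ) - 1) ≤ 16 * |val| := by
      have h1 : (n : ℝ) - 1 ≤ (16 * |val|) ^ 2 := by
        have : val ^ 2 = |val| ^ 2 := (sq_abs val).symm
        nlinarith [hval2]
      calc Real.sqrt ((n : ℝ) - 1) ≤ Real.sqrt ((16 * |val|) ^ 2) := Real.sqrt_le_sqrt h1
        _ = 16 * |val| := Real.sqrt_sq (by positivity)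
    linarith
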